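/- arXiv:2312.11286 — 8 statements merged into one kernel-verified Lean document; each statement's English description precedes it below -/
import Mathlib

section
/- In the compact indifference model, let ω : N → H be an injective allocation satisfying ω(i) ≿_i ω(j) for all agents i, j. Then the probability that ω is envy-free equals ∏_{i∈N} 1 / |{ j ∈ N : ω(j) ~_i ω(i) }|. -/
/-- A strict linear order on `H`, given as a relation together with a proof that it is a
strict total order. -/
def StrictLinearOrder (H : Type*) : Type _ :=
  {r : H → H → Prop // IsStrictTotalOrder H r}

/-- A total preorder: a reflexive, transitive and total relation. -/
def IsTotalPreorderRel {H : Type*} (R : H → H → Prop) : Prop :=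
  Reflexive R ∧ Transitive R ∧ ∀ a b : H, R a b ∨ R b a

/-- `r` is a linear extension of the (weak) relation `R`: whenever `a` is strictly preferred to
`b` under `R`, `a` is ranked above `b` by `r`. -/
def IsLinearExtension {H : Type*} (R : H → H → Prop) (r : StrictLinearOrder H) : Prop :=
  ∀ a b : H, R a b → ¬ R b a → r.1 a b

section Aux

variable {H : Type*}

/-- Conjugation of a strict linear order by a permutation. -/
def conjSLO (σ : Equiv.Perm H) (r : StrictLinearOrder H) : StrictLinearOrder H :=
  ⟨fun a b => r.1 (σ a) (σ b), by
    haveI := r.2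
    refine { trichotomous := fun a b => ?_, irrefl := fun a => irrefl_of r.1 _,
             trans := fun a b c hab hbc => trans_of r.1 hab hbc }
    rcases trichotomous_of r.1 (σ a) (σ b) with h | h | h
    · exact fun h1 _ => (h1 h).elim
    · exact fun _ _ => σ.injective h
    · exact fun _ h2 => (h2 h).elim⟩

lemma conjSLO_conjSLO (σ : Equiv.Perm H) (r : StrictLinearOrder H)
    (hσ : ∀ a, σ (σ a) = a) : conjSLO σ (conjSLO σ r) = r := by
  apply Subtype.ext
  funext a b
  simp [conjSLO, hσ]

/-- Any total preorder on a finite type admits a linear extension. -/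
lemma exists_linear_extension [Fintype H] (R : H → H → Prop) (hR : IsTotalPreorderRel R) :
    Nonempty {r : StrictLinearOrder H // IsLinearExtension R r} := by
  classical
  letI : LinearOrder H := LinearOrder.lift' (Fintype.equivFin H) (Equiv.injective _)
  obtain ⟨hrefl, htrans, htot⟩ := hR
  refine ⟨⟨⟨fun a b => (R a b ∧ ¬ R b a) ∨ ((R a b ∧ R b a) ∧ a < b), ?_⟩, ?_⟩⟩
  · refine { trichotomous := fun a b => ?_, irrefl := fun a h => ?_,
             trans := fun a b c hab hbc => ?_ }
    · by_cases hab : R a b <;> by_cases hba : R b a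
      · rcases lt_trichotomy a b with h | h | h
        · exact fun h1 _ => (h1 (Or.inr ⟨⟨hab, hba⟩, h⟩)).elim
        · exact fun _ _ => h
        · exact fun _ h2 => (h2 (Or.inr ⟨⟨hba, hab⟩, h⟩)).elim
      · exact fun h1 _ => (h1 (Or.inl ⟨hab, hba⟩)).elim
      · exact fun _ h2 => (h2 (Or.inl ⟨hba, hab⟩)).elim
      · exact absurd (htot a b) (by simp [hab, hba])
    · rcases h with ⟨h1, h2⟩ | ⟨_, h2⟩
      · exact h2 h1
      · exact lt_irrefl _ h2
    · rcases hab with ⟨hab, hnba⟩ | ⟨⟨hab, hba⟩, hlt⟩ <;>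
        rcases hbc with ⟨hbc, hncb⟩ | ⟨⟨hbc, hcb⟩, hlt'⟩
      · exact Or.inl ⟨htrans hab hbc, fun hca => hnba (htrans hbc hca)⟩
      · exact Or.inl ⟨htrans hab hbc, fun hca => hnba (htrans hbc hca)⟩
      · exact Or.inl ⟨htrans hab hbc, fun hca => hncb (htrans hca hab)⟩
      · exact Or.inr ⟨⟨htrans hab hbc, htrans hcb hba⟩, lt_trans hlt hlt'⟩
  · intro a b hab hnba
    exact Or.inl ⟨hab, hnba⟩

end Aux

theorem key_card {N H : Type*} [Fintype N] [Fintype H]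
    (R : H → H → Prop) (hR : IsTotalPreorderRel R)
    (ω : N → H) (hω : Function.Injective ω) (i : N) (hw : ∀ j, R (ω i) (ω j)) :
    Nat.card {r : StrictLinearOrder H // IsLinearExtension R r} =
      Nat.card {j : N // R (ω j) (ω i) ∧ R (ω i) (ω j)} *
        Nat.card {r : StrictLinearOrder H //
          IsLinearExtension R r ∧ ∀ j : N, j ≠ i → r.1 (ω i) (ω j)} := by
  classical
  obtain ⟨hrefl, htrans, htot⟩ := hR
  set T := {j : N // R (ω j) (ω i) ∧ R (ω i) (ω j)} with hT
  let i₀ : T := ⟨i, hrefl _, hrefl _⟩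
  let Top : StrictLinearOrder H → T → Prop :=
    fun r t => ∀ s : T, s ≠ t → r.1 (ω t.1) (ω s.1)
  have top_unique : ∀ r t t', Top r t → Top r t' → t = t' := by
    intro r t t' h h'
    by_contra hne
    haveI := r.2
    exact asymm_of r.1 (h t' (Ne.symm hne)) (h' t hne)
  have top_exists : ∀ r : StrictLinearOrder H, ∃ t, Top r t := by
    intro r
    haveI := r.2
    haveI : IsIrrefl T (fun t s : T => r.1 (ω t.1) (ω s.1)) :=
      ⟨fun t h => irrefl_of r.1 _ h⟩
    haveI : IsTrans T (fun t s : T => r.1 (ω t.1) (ω s.1)) :=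
      ⟨fun _ _ _ h h' => trans_of r.1 h h'⟩
    have hwf : WellFounded (fun t s : T => r.1 (ω t.1) (ω s.1)) :=
      Finite.wellFounded_of_trans_of_irrefl _
    obtain ⟨t, -, ht⟩ := hwf.has_min Set.univ ⟨i₀, trivial⟩
    refine ⟨t, fun s hs => ?_⟩
    rcases trichotomous_of r.1 (ω t.1) (ω s.1) with h | h | h
    · exact h
    · exact absurd (Subtype.ext (hω h)).symm hs
    · exact absurd h (ht s trivial)
  have top_exists' : ∀ r : {r : StrictLinearOrder H // IsLinearExtension R r},
      ∃ t, Top r.1 t := fun r => top_exists r.1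
  choose f hf using top_exists'
  have f_eq : ∀ r t, Top r.1 t → f r = t := fun r t h => top_unique _ _ _ (hf r) h
  have hswap_tie : ∀ (t : T) (a : H),
      R a (Equiv.swap (ω t.1) (ω i) a) ∧ R (Equiv.swap (ω t.1) (ω i) a) a := by
    intro t a
    rcases eq_or_ne a (ω t.1) with rfl | h1
    · rw [Equiv.swap_apply_left]; exact ⟨t.2.1, t.2.2⟩
    rcases eq_or_ne a (ω i) with rfl | h2
    · rw [Equiv.swap_apply_right]; exact ⟨t.2.2, t.2.1⟩
    · rw [Equiv.swap_apply_of_ne_of_ne h1 h2]; exact ⟨hrefl a, hrefl a⟩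
  have hconj_ext : ∀ (t : T) (r : StrictLinearOrder H), IsLinearExtension R r →
      IsLinearExtension R (conjSLO (Equiv.swap (ω t.1) (ω i)) r) := by
    intro t r hr a b hab hnba
    refine hr _ _ ?_ ?_
    · exact htrans (hswap_tie t a).2 (htrans hab (hswap_tie t b).1)
    · intro h
      exact hnba (htrans (hswap_tie t b).1 (htrans h (hswap_tie t a).2))
  have hswap_ω : ∀ t s : T,
      Equiv.swap (ω t.1) (ω i) (ω s.1) = ω ((Equiv.swap t i₀ s).1) := by
    intro t s
    rcases eq_or_ne s t with rfl | h1
    · rw [Equiv.swap_apply_left, Equiv.swap_apply_left]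
    rcases eq_or_ne s i₀ with rfl | h2
    · rw [Equiv.swap_apply_right, Equiv.swap_apply_right]
    · rw [Equiv.swap_apply_of_ne_of_ne (fun h => h1 (Subtype.ext (hω h)))
        (fun h => h2 (Subtype.ext (hω h))), Equiv.swap_apply_of_ne_of_ne h1 h2]
  have htop_conj : ∀ (t : T) (r : StrictLinearOrder H) (s : T),
      Top r (Equiv.swap t i₀ s) → Top (conjSLO (Equiv.swap (ω t.1) (ω i)) r) s := by
    intro t r s h u hu
    show r.1 (Equiv.swap (ω t.1) (ω i) (ω s.1)) (Equiv.swap (ω t.1) (ω i) (ω u.1))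
    rw [hswap_ω t s, hswap_ω t u]
    exact h _ (fun hc => hu ((Equiv.swap t i₀).injective hc))
  have htop_iff : ∀ r : StrictLinearOrder H, IsLinearExtension R r →
      ((∀ j : N, j ≠ i → r.1 (ω i) (ω j)) ↔ Top r i₀) := by
    intro r hr
    constructor
    · intro h s hs
      exact h s.1 (fun hc => hs (Subtype.ext hc))
    · intro h j hj
      by_cases hjt : R (ω j) (ω i)
      · exact h ⟨j, hjt, hw j⟩ (fun hc => hj (congrArg (fun x => x.1) hc))
      · exact hr _ _ (hw j) hjt
  have e : {r : StrictLinearOrder H // IsLinearExtension R r} ≃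
      T × {r : StrictLinearOrder H //
        IsLinearExtension R r ∧ ∀ j : N, j ≠ i → r.1 (ω i) (ω j)} :=
    { toFun := fun r =>
        (f r, ⟨conjSLO (Equiv.swap (ω (f r).1) (ω i)) r.1,
          hconj_ext _ _ r.2,
          (htop_iff _ (hconj_ext _ _ r.2)).2
            (htop_conj (f r) r.1 i₀ (by rw [Equiv.swap_apply_right]; exact hf r))⟩)
      invFun := fun p => ⟨conjSLO (Equiv.swap (ω p.1.1) (ω i)) p.2.1,
        hconj_ext _ _ p.2.2.1⟩
      left_inv := fun r => by
        apply Subtype.ext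
        exact conjSLO_conjSLO _ _ (fun a => Equiv.swap_apply_self _ _ a)
      right_inv := fun p => by
        obtain ⟨t, r'⟩ := p
        have h1 : f ⟨conjSLO (Equiv.swap (ω t.1) (ω i)) r'.1, hconj_ext _ _ r'.2.1⟩ = t :=
          f_eq _ t (htop_conj t r'.1 t
            (by rw [Equiv.swap_apply_left]; exact (htop_iff _ r'.2.1).1 r'.2.2))
        refine Prod.ext h1 (Subtype.ext ?_)
        show conjSLO (Equiv.swap (ω (f ⟨conjSLO (Equiv.swap (ω t.1) (ω i)) r'.1,
            hconj_ext _ _ r'.2.1⟩).1) (ω i))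
            (conjSLO (Equiv.swap (ω t.1) (ω i)) r'.1) = r'.1
        rw [h1]
        exact conjSLO_conjSLO _ _ (fun a => Equiv.swap_apply_self _ _ a) }
  rw [Nat.card_congr e, Nat.card_prod]

/-- Compact indifference model: each agent `i` has a total preorder `R i` on houses and draws a
uniformly random strict linear extension of it, independently across agents.  If an injective
allocation `ω` satisfies `ω i ≿_i ω j` for all agents `i, j`, then the probability that `ω` is
envy-free (the fraction of profiles of linear extensions making `ω` envy-free) equals
`∏_i 1 / |{ j : ω j ~_i ω i }|`. -/
theorem stmt_1 {N H : Type*} [Fintype N] [Fintype H]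
    (R : N → H → H → Prop) (hR : ∀ i, IsTotalPreorderRel (R i))
    (ω : N → H) (hω : Function.Injective ω)
    (hweak : ∀ i j : N, R i (ω i) (ω j)) :
    (Nat.card {P : N → StrictLinearOrder H //
          (∀ i, IsLinearExtension (R i) (P i)) ∧
          (∀ i : N, ∀ j : N, j ≠ i → (P i).1 (ω i) (ω j))} : ℝ)
        / ∏ i : N, (Nat.card {r : StrictLinearOrder H // IsLinearExtension (R i) r} : ℝ)
      = ∏ i : N, 1 / (Nat.card {j : N // R i (ω j) (ω i) ∧ R i (ω i) (ω j)} : ℝ) := by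
  classical
  haveI hfin : Finite (StrictLinearOrder H) := by unfold StrictLinearOrder; infer_instance
  have e1 : {P : N → StrictLinearOrder H //
          (∀ i, IsLinearExtension (R i) (P i)) ∧
          (∀ i : N, ∀ j : N, j ≠ i → (P i).1 (ω i) (ω j))} ≃
      ∀ i : N, {r : StrictLinearOrder H //
          IsLinearExtension (R i) r ∧ ∀ j : N, j ≠ i → r.1 (ω i) (ω j)} :=
    (Equiv.subtypeEquivRight (fun P => forall_and.symm)).trans
      (Equiv.subtypePiEquivPi
        (p := fun i r => IsLinearExtension (R i) r ∧ ∀ j : N, j ≠ i → r.1 (ω i) (ω j)))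
  rw [Nat.card_congr e1, Nat.card_pi, Nat.cast_prod, ← Finset.prod_div_distrib]
  refine Finset.prod_congr rfl fun i _ => ?_
  have hk := key_card (R i) (hR i) ω hω i (hweak i)
  have hEne : Nat.card {r : StrictLinearOrder H // IsLinearExtension (R i) r} ≠ 0 :=
    Nat.card_ne_zero.mpr ⟨exists_linear_extension (R i) (hR i), inferInstance⟩
  have hTne : Nat.card {j : N // R i (ω j) (ω i) ∧ R i (ω i) (ω j)} ≠ 0 :=
    Nat.card_ne_zero.mpr ⟨⟨⟨i, (hR i).1 _, (hR i).1 _⟩⟩, inferInstance⟩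
  have hnum_ne : Nat.card {r : StrictLinearOrder H //
      IsLinearExtension (R i) r ∧ ∀ j : N, j ≠ i → r.1 (ω i) (ω j)} ≠ 0 := by
    intro h
    rw [hk, h, mul_zero] at hEne
    exact hEne rfl
  rw [hk]
  push_cast
  rw [mul_comm, div_mul_eq_div_div, div_self (Nat.cast_ne_zero.mpr hnum_ne)]
end

section
/- Let 0 < ε ≤ 1 and consider the compact indifference model. If an injective allocation ω : N → H has EF-probability at least ε, then ∑_{i∈N} ( |{ j ∈ N : ω(j) ~_i ω(i) }| − 1 ) ≤ 1/ε; equivalently, the envy-matrix of ω (the N×N binary matrix with entry 1 at (i,j) exactly when ω(j) ~_i ω(i), which has all diagonal entries equal to 1) has at most 1/ε ones off the main diagonal. -/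
section Aux

variable {H : Type*}

instance StrictLinearOrder.finite [Finite H] : Finite (StrictLinearOrder H) :=
  Subtype.finite

/-- The order obtained from `r` by exchanging the positions of `a` and `b`. -/
def swapOrder [DecidableEq H] (r : StrictLinearOrder H) (a b : H) : StrictLinearOrder H :=
  ⟨fun x y => r.1 (Equiv.swap a b x) (Equiv.swap a b y), by
    haveI : IsStrictTotalOrder H r.1 := r.2
    exact
      { trichotomous := fun x y hn1 hn2 => by
          rcases trichotomous_of r.1 (Equiv.swap a b x) (Equiv.swap a b y) with h | h | h
          · exact absurd h hn1
          · exact (Equiv.swap a b).injective h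
          · exact absurd h hn2
        irrefl := fun x h => irrefl_of r.1 _ h
        trans := fun x y z h1 h2 => trans_of r.1 h1 h2 }⟩

lemma swapOrder_ext [DecidableEq H] {R : H → H → Prop} (hR : IsTotalPreorderRel R)
    {a b : H} (hab : R a b) (hba : R b a) {r : StrictLinearOrder H}
    (hr : IsLinearExtension R r) : IsLinearExtension R (swapOrder r a b) := by
  obtain ⟨hrefl, htrans, -⟩ := hR
  have tilde : ∀ u, R u (Equiv.swap a b u) ∧ R (Equiv.swap a b u) u := by
    intro u
    rcases eq_or_ne u a with rfl | hua
    · rw [Equiv.swap_apply_left]; exact ⟨hab, hba⟩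
    · rcases eq_or_ne u b with rfl | hub
      · rw [Equiv.swap_apply_right]; exact ⟨hba, hab⟩
      · rw [Equiv.swap_apply_of_ne_of_ne hua hub]; exact ⟨hrefl u, hrefl u⟩
  intro x y hxy hnyx
  refine hr _ _ (htrans (tilde x).2 (htrans hxy (tilde y).1)) ?_
  intro h
  exact hnyx (htrans (tilde y).1 (htrans h (tilde x).2))

lemma swap_top {N : Type*} [DecidableEq H] {r : StrictLinearOrder H} {ω : N → H}
    (hω : Function.Injective ω) {i : N}
    (htop : ∀ m, m ≠ i → r.1 (ω i) (ω m)) (j m : N) (hm : m ≠ j) :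
    r.1 (Equiv.swap (ω i) (ω j) (ω j)) (Equiv.swap (ω i) (ω j) (ω m)) := by
  rw [Equiv.swap_apply_right]
  rcases eq_or_ne m i with rfl | hmi
  · rw [Equiv.swap_apply_left]
    exact htop j (fun h => hm h.symm)
  · rw [Equiv.swap_apply_of_ne_of_ne (fun h => hmi (hω h)) (fun h => hm (hω h))]
    exact htop m hmi

/-- Key per-agent counting bound: the size of the indifference class of `ω i` times the number of
envy-free extensions is at most the total number of extensions. -/
lemma key_count {N : Type*} [Finite N] [Finite H] (Ri : H → H → Prop)
    (hRi : IsTotalPreorderRel Ri) (ω : N → H) (hω : Function.Injective ω) (i : N) :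
    Nat.card {j : N // Ri (ω j) (ω i) ∧ Ri (ω i) (ω j)} *
      Nat.card {r : StrictLinearOrder H //
        IsLinearExtension Ri r ∧ ∀ j : N, j ≠ i → r.1 (ω i) (ω j)} ≤
      Nat.card {r : StrictLinearOrder H // IsLinearExtension Ri r} := by
  classical
  rw [← Nat.card_prod]
  refine Nat.card_le_card_of_injective
    (fun p => ⟨swapOrder p.2.1 (ω i) (ω p.1.1),
      swapOrder_ext hRi p.1.2.2 p.1.2.1 p.2.2.1⟩) ?_
  rintro ⟨⟨j, hj⟩, ⟨r, hr⟩⟩ ⟨⟨j', hj'⟩, ⟨r', hr'⟩⟩ h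
  have hrel : (swapOrder r (ω i) (ω j)).1 = (swapOrder r' (ω i) (ω j')).1 :=
    congrArg Subtype.val (congrArg Subtype.val h)
  have hjj : j = j' := by
    by_contra hne
    have h1 : r.1 (Equiv.swap (ω i) (ω j) (ω j)) (Equiv.swap (ω i) (ω j) (ω j')) :=
      swap_top hω hr.2 j j' (Ne.symm hne)
    have h2 : r'.1 (Equiv.swap (ω i) (ω j') (ω j')) (Equiv.swap (ω i) (ω j') (ω j)) :=
      swap_top hω hr'.2 j' j hne
    have h1' : r'.1 (Equiv.swap (ω i) (ω j') (ω j)) (Equiv.swap (ω i) (ω j') (ω j')) := by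
      have := congrFun (congrFun hrel (ω j)) (ω j')
      exact this ▸ h1
    haveI : IsStrictTotalOrder H r'.1 := r'.2
    exact irrefl_of r'.1 _ (trans_of r'.1 h1' h2)
  subst hjj
  have hrr : r = r' := by
    refine Subtype.ext ?_
    funext x y
    have h2 : r.1 (Equiv.swap (ω i) (ω j) (Equiv.swap (ω i) (ω j) x))
          (Equiv.swap (ω i) (ω j) (Equiv.swap (ω i) (ω j) y)) =
        r'.1 (Equiv.swap (ω i) (ω j) (Equiv.swap (ω i) (ω j) x))
          (Equiv.swap (ω i) (ω j) (Equiv.swap (ω i) (ω j) y)) :=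
      congrFun (congrFun hrel (Equiv.swap (ω i) (ω j) x)) (Equiv.swap (ω i) (ω j) y)
    rwa [Equiv.swap_apply_self, Equiv.swap_apply_self] at h2
  subst hrr
  rfl

lemma sum_sub_one_le_prod {N : Type*} [Fintype N] (f : N → ℝ) (hf : ∀ i, 1 ≤ f i) :
    ∑ i, (f i - 1) ≤ ∏ i, f i := by
  have key : ∀ s : Finset N, ∑ i ∈ s, (f i - 1) ≤ ∏ i ∈ s, f i - 1 := by
    intro s
    induction s using Finset.cons_induction with
    | empty => simp
    | cons a s ha ih =>
      rw [Finset.sum_cons, Finset.prod_cons]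
      have h1 : (1 : ℝ) ≤ ∏ i ∈ s, f i := by
        calc (1 : ℝ) = ∏ _i ∈ s, (1 : ℝ) := by simp
          _ ≤ ∏ i ∈ s, f i :=
            Finset.prod_le_prod (by intro i _; norm_num) (fun i _ => hf i)
      have h2 : (1 : ℝ) ≤ f a := hf a
      nlinarith [ih]
  calc ∑ i, (f i - 1) ≤ ∏ i, f i - 1 := key Finset.univ
    _ ≤ ∏ i, f i := by linarith

end Aux

/-- Compact indifference model: if an injective allocation `ω` has EF-probability (the fraction
of profiles of linear extensions of the agents' total preorders making `ω` envy-free) at least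
`ε`, where `0 < ε ≤ 1`, then `∑_i (|{ j : ω j ~_i ω i }| − 1) ≤ 1/ε`, i.e. the envy-matrix of
`ω` has at most `1/ε` ones off the main diagonal. -/
theorem stmt_2 {N H : Type*} [Fintype N] [Fintype H]
    (R : N → H → H → Prop) (hR : ∀ i, IsTotalPreorderRel (R i))
    (ω : N → H) (hω : Function.Injective ω)
    (ε : ℝ) (hε0 : 0 < ε) (hε1 : ε ≤ 1)
    (hprob : ε ≤
      (Nat.card {P : N → StrictLinearOrder H //
            (∀ i, IsLinearExtension (R i) (P i)) ∧
            (∀ i : N, ∀ j : N, j ≠ i → (P i).1 (ω i) (ω j))} : ℝ)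
        / ∏ i : N, (Nat.card {r : StrictLinearOrder H // IsLinearExtension (R i) r} : ℝ)) :
    ∑ i : N, ((Nat.card {j : N // R i (ω j) (ω i) ∧ R i (ω i) (ω j)} : ℝ) - 1) ≤ 1 / ε := by
  classical
  set k : N → ℕ := fun i => Nat.card {j : N // R i (ω j) (ω i) ∧ R i (ω i) (ω j)} with hk
  set a : N → ℕ := fun i => Nat.card {r : StrictLinearOrder H //
    IsLinearExtension (R i) r ∧ ∀ j : N, j ≠ i → r.1 (ω i) (ω j)} with ha
  set D : N → ℕ := fun i => Nat.card {r : StrictLinearOrder H // IsLinearExtension (R i) r}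
    with hD
  set A : ℕ := Nat.card {P : N → StrictLinearOrder H //
      (∀ i, IsLinearExtension (R i) (P i)) ∧
      (∀ i : N, ∀ j : N, j ≠ i → (P i).1 (ω i) (ω j))} with hA
  -- the profile count factorizes
  have hAeq : A = ∏ i, a i := by
    rw [hA, ha, ← Nat.card_pi]
    refine Nat.card_congr ((Equiv.subtypeEquivRight (q := fun P =>
        ∀ i, IsLinearExtension (R i) (P i) ∧ ∀ j : N, j ≠ i → (P i).1 (ω i) (ω j))
      (fun P => ?_)).trans (Equiv.subtypePiEquivPi
        (β := fun _ : N => StrictLinearOrder H)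
        (p := fun i r => IsLinearExtension (R i) r ∧ ∀ j : N, j ≠ i → r.1 (ω i) (ω j))))
    constructor
    · rintro ⟨h1, h2⟩ i
      exact ⟨h1 i, h2 i⟩
    · intro h
      exact ⟨fun i => (h i).1, fun i => (h i).2⟩
  -- key per-agent bound
  have hkey : ∀ i, k i * a i ≤ D i := fun i => key_count (R i) (hR i) ω hω i
  -- positivity of denominator
  have hDpos : (0 : ℝ) < ∏ i : N, (D i : ℝ) := by
    by_contra hle
    push_neg at hle
    have hDnn : (0 : ℝ) ≤ ∏ i : N, (D i : ℝ) :=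
      Finset.prod_nonneg (fun i _ => Nat.cast_nonneg _)
    have : (∏ i : N, (D i : ℝ)) = 0 := le_antisymm hle hDnn
    rw [this, div_zero] at hprob
    linarith
  -- numerator bound: ε * ∏ D ≤ A
  have hprob' : ε ≤ (A : ℝ) / ∏ i : N, (D i : ℝ) := hprob
  have hnum : ε * ∏ i : N, (D i : ℝ) ≤ (A : ℝ) := by
    have h := mul_le_mul_of_nonneg_right hprob' (le_of_lt hDpos)
    rwa [div_mul_cancel₀ _ (ne_of_gt hDpos)] at h
  have hApos : (0 : ℝ) < (A : ℝ) := lt_of_lt_of_le (by positivity) hnum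
  have hapos : ∀ i, 0 < a i := by
    intro i
    by_contra hle
    push_neg at hle
    have : a i = 0 := Nat.le_zero.mp hle
    have : A = 0 := by
      rw [hAeq]
      exact Finset.prod_eq_zero (Finset.mem_univ i) this
    rw [this] at hApos
    simp at hApos
  -- k i ≥ 1
  have hkpos : ∀ i, 1 ≤ k i := by
    intro i
    have : Nonempty {j : N // R i (ω j) (ω i) ∧ R i (ω i) (ω j)} :=
      ⟨⟨i, (hR i).1 (ω i), (hR i).1 (ω i)⟩⟩
    exact Nat.card_pos
  -- ε * ∏ k ≤ 1
  have hprod : ε * ∏ i : N, (k i : ℝ) ≤ 1 := by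
    have h1 : (∏ i : N, ((k i : ℝ) * (a i : ℝ))) ≤ ∏ i : N, (D i : ℝ) := by
      apply Finset.prod_le_prod
      · intro i _; positivity
      · intro i _
        exact_mod_cast hkey i
    have h2 : (∏ i : N, ((k i : ℝ) * (a i : ℝ)))
        = (∏ i : N, (k i : ℝ)) * (A : ℝ) := by
      rw [Finset.prod_mul_distrib, hAeq]
      push_cast
      ring
    have h3 : ε * ((∏ i : N, (k i : ℝ)) * (A : ℝ)) ≤ (A : ℝ) := by
      calc ε * ((∏ i : N, (k i : ℝ)) * (A : ℝ))
          = ε * (∏ i : N, ((k i : ℝ) * (a i : ℝ))) := by rw [h2]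
        _ ≤ ε * ∏ i : N, (D i : ℝ) := by
            apply mul_le_mul_of_nonneg_left h1 (le_of_lt hε0)
        _ ≤ (A : ℝ) := hnum
    have := (mul_le_mul_iff_of_pos_right hApos).mp (by linarith [h3] : ε * (∏ i : N, (k i : ℝ)) * (A : ℝ) ≤ 1 * (A : ℝ))
    linarith
  have hkprod : ∏ i : N, (k i : ℝ) ≤ 1 / ε := by
    rw [le_div_iff₀ hε0]
    linarith [hprod]
  calc ∑ i : N, ((k i : ℝ) - 1)
      ≤ ∏ i : N, (k i : ℝ) :=
        sum_sub_one_le_prod _ (fun i => by exact_mod_cast hkpos i)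
    _ ≤ 1 / ε := hkprod
end

section
/- Let each agent i ∈ N have a total preorder ≿_i on the finite set H, and let ω : N → H be injective. There exist strict linear orders ≻_i on H, each a linear extension of ≿_i, under which ω is envy-free, if and only if ω(i) ≿_i ω(j) for all agents i and j. (Equivalently, under the compact indifference model, ω has positive EF-probability if and only if ω(i) ≿_i ω(j) for all i, j.) -/
/-- Let each agent `i` have a total preorder `R i` on the finite set `H` and let `ω` be an
injective allocation.  There is a profile of strict linear extensions of the agents' preorders
under which `ω` is envy-free if and only if `ω i ≿_i ω j` for all agents `i, j`.  (Equivalently,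
under the compact indifference model, `ω` has positive EF-probability iff `ω i ≿_i ω j` for all
`i, j`.) -/
theorem stmt_4 {N H : Type*} [Finite H]
    (R : N → H → H → Prop) (hR : ∀ i, IsTotalPreorderRel (R i))
    (ω : N → H) (hω : Function.Injective ω) :
    (∃ P : N → StrictLinearOrder H,
        (∀ i, IsLinearExtension (R i) (P i)) ∧
        (∀ i : N, ∀ j : N, j ≠ i → (P i).1 (ω i) (ω j))) ↔
    (∀ i j : N, R i (ω i) (ω j)) := by
  constructor
  · rintro ⟨P, hext, hef⟩ i j
    rcases eq_or_ne j i with rfl | hji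
    · exact (hR _).1 _
    by_contra hnot
    rcases (hR i).2.2 (ω i) (ω j) with h | h
    · exact hnot h
    have h1 : (P i).1 (ω j) (ω i) := hext i _ _ h hnot
    have h2 := hef i j hji
    haveI := (P i).2
    exact irrefl_of (P i).1 (ω i) (trans_of (P i).1 h2 h1)
  · intro htop
    classical
    set W : H → H → Prop := WellOrderingRel with hW
    haveI : IsWellOrder H W := WellOrderingRel.isWellOrder
    -- tie-break for agent i
    have hRrefl : ∀ i a, R i a a := fun i a => (hR i).1 a
    have hRtrans : ∀ i, Transitive (R i) := fun i => (hR i).2.1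
    have hRtot : ∀ i a b, R i a b ∨ R i b a := fun i => (hR i).2.2
    refine ⟨fun i => ⟨fun a b =>
      (R i a b ∧ ¬ R i b a) ∨
      ((R i a b ∧ R i b a) ∧
        ((a = ω i ∧ b ≠ ω i) ∨ (a ≠ ω i ∧ b ≠ ω i ∧ W a b))), ?_⟩, ?_, ?_⟩
    · refine { trichotomous := ?_, irrefl := ?_, trans := ?_ }
      · -- trichotomous
        intro a b hn1 hn2
        by_contra hab0
        refine Or.elim3 ?_ hn1 hab0 hn2
        rcases eq_or_ne a b with rfl | hab
        · exact Or.inr (Or.inl rfl)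
        have tie : ∀ a b : H, a ≠ b → R i a b → R i b a →
            ((a = ω i ∧ b ≠ ω i) ∨ (a ≠ ω i ∧ b ≠ ω i ∧ W a b)) ∨
            ((b = ω i ∧ a ≠ ω i) ∨ (b ≠ ω i ∧ a ≠ ω i ∧ W b a)) := by
          intro a b hab h1 h2
          rcases eq_or_ne a (ω i) with ha | ha
          · exact Or.inl (Or.inl ⟨ha, fun hb => hab (ha.trans hb.symm)⟩)
          · rcases eq_or_ne b (ω i) with hb | hb
            · exact Or.inr (Or.inl ⟨hb, ha⟩)
            · rcases trichotomous_of W a b with hw | hw | hw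
              · exact Or.inl (Or.inr ⟨ha, hb, hw⟩)
              · exact absurd hw hab
              · exact Or.inr (Or.inr ⟨hb, ha, hw⟩)
        rcases hRtot i a b with h1 | h1
        · by_cases h2 : R i b a
          · rcases tie a b hab h1 h2 with ht | ht
            · exact Or.inl (Or.inr ⟨⟨h1, h2⟩, ht⟩)
            · exact Or.inr (Or.inr (Or.inr ⟨⟨h2, h1⟩, ht⟩))
          · exact Or.inl (Or.inl ⟨h1, h2⟩)
        · by_cases h2 : R i a b
          · rcases tie a b hab h2 h1 with ht | ht
            · exact Or.inl (Or.inr ⟨⟨h2, h1⟩, ht⟩)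
            · exact Or.inr (Or.inr (Or.inr ⟨⟨h1, h2⟩, ht⟩))
          · exact Or.inr (Or.inr (Or.inl ⟨h1, h2⟩))
      · -- irrefl
        intro a h
        rcases h with ⟨h1, h2⟩ | ⟨_, h⟩
        · exact h2 h1
        · rcases h with ⟨h1, h2⟩ | ⟨_, _, h⟩
          · exact h2 h1
          · exact irrefl_of W a h
      · -- trans
        intro a b c hab hbc
        rcases hab with ⟨h1, h2⟩ | ⟨⟨h1, h1'⟩, ht1⟩ <;>
          rcases hbc with ⟨h3, h4⟩ | ⟨⟨h3, h3'⟩, ht2⟩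
        · refine Or.inl ⟨hRtrans i h1 h3, fun hca => h2 (hRtrans i h3 hca)⟩
        · refine Or.inl ⟨hRtrans i h1 h3, fun hca => h2 (hRtrans i h3 hca)⟩
        · refine Or.inl ⟨hRtrans i h1 h3, fun hca => h4 (hRtrans i hca h1)⟩
        · refine Or.inr ⟨⟨hRtrans i h1 h3, hRtrans i h3' h1'⟩, ?_⟩
          rcases ht1 with ⟨ha, hb⟩ | ⟨ha, hb, hw1⟩
          · rcases ht2 with ⟨hb', hc⟩ | ⟨hb', hc, hw2⟩
            · exact absurd hb' hb
            · exact Or.inl ⟨ha, hc⟩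
          · rcases ht2 with ⟨hb', hc⟩ | ⟨hb', hc, hw2⟩
            · exact absurd hb' hb
            · exact Or.inr ⟨ha, hc, trans_of W hw1 hw2⟩
    · -- linear extension
      intro i a b h1 h2
      exact Or.inl ⟨h1, h2⟩
    · -- envy-free
      intro i j hji
      by_cases h2 : R i (ω j) (ω i)
      · refine Or.inr ⟨⟨htop i j, h2⟩, Or.inl ⟨rfl, fun h => hji (hω h)⟩⟩
      · exact Or.inl ⟨htop i j, h2⟩
end

section
/- Let E be a finite set, let S_1, …, S_d be subsets of E, and let q, ℓ be positive integers with q ≤ |E| and ℓ ≤ d; set k = |E| − q + d and r = |E| − q + d − ℓ. Consider the house-allocation instance with agent set N = { a_e : e ∈ E } ∪ { a*_t : t ∈ {1,…,d} }, house set H = { h*_t : t ∈ {1,…,d} } ∪ { h_s : s ∈ {1,…,r} }, and binary preferences given by A_{a_e} = { h*_t : e ∈ S_t } for each e ∈ E and A_{a*_t} = { h*_t } for each t. Then there exists a partial allocation ω whose domain consists of exactly k agents and in which every allocated agent is envy-free, if and only if there exists I ⊆ {1,…,d} with |I| = ℓ and |⋃_{t∈I} S_t| ≤ q. -/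
/-- The binary preferences of the house-allocation instance built from a Minimum Coverage
input.  Agents are `E ⊕ Fin d` (`Sum.inl e` is agent `a_e`, `Sum.inr t` is agent `a*_t`);
houses are `Fin d ⊕ Fin r` (`Sum.inl t` is house `h*_t`, `Sum.inr s` is house `h_s`).
`covPref d r S i` is the set `A_i` of houses preferred by agent `i`. -/
def covPref {E : Type*} (d r : ℕ) (S : Fin d → Finset E) :
    E ⊕ Fin d → Set (Fin d ⊕ Fin r) :=
  Sum.elim (fun e => {h | ∃ t : Fin d, e ∈ S t ∧ h = Sum.inl t})
           (fun t => {h | h = Sum.inl t})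

/-- Correctness of the reduction from Minimum Coverage to ExistsPartialEF with binary
preferences: with `k = |E| − q + d` and `r = |E| − q + d − ℓ`, there exists a partial
allocation of houses to exactly `k` agents in which every allocated agent is envy-free
(an allocated agent `i` is envy-free if it receives a house in `A_i` or no allocated house
lies in `A_i`) if and only if there exists `I ⊆ {1,…,d}` with `|I| = ℓ` and
`|⋃_{t∈I} S_t| ≤ q`. -/
theorem stmt_10 {E : Type*} [Fintype E] [DecidableEq E]
    (d : ℕ) (S : Fin d → Finset E) (q ℓ : ℕ)
    (hq : 0 < q) (hℓ : 0 < ℓ) (hqE : q ≤ Fintype.card E) (hℓd : ℓ ≤ d) :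
    (∃ (D : Finset (E ⊕ Fin d))
        (ω : E ⊕ Fin d → Fin d ⊕ Fin (Fintype.card E - q + d - ℓ)),
        D.card = Fintype.card E - q + d ∧ Set.InjOn ω ↑D ∧
        ∀ i ∈ D, (ω i ∈ covPref d (Fintype.card E - q + d - ℓ) S i ∨
          ∀ j ∈ D, ω j ∉ covPref d (Fintype.card E - q + d - ℓ) S i)) ↔
    (∃ I : Finset (Fin d), I.card = ℓ ∧ (I.biUnion S).card ≤ q) := by
  set n := Fintype.card E with hn
  set r := n - q + d - ℓ with hr
  set k := n - q + d with hk
  constructor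
  · rintro ⟨D, ω, hcard, hinj, hEF⟩
    -- the set of starred houses that are allocated
    set I : Finset (Fin d) :=
      Finset.univ.filter (fun t => ∃ i ∈ D, ω i = Sum.inl t) with hI
    have hmemI : ∀ t : Fin d, t ∈ I ↔ ∃ i ∈ D, ω i = Sum.inl t := by
      intro t; simp [hI]
    -- Step 1 : ℓ ≤ I.card
    have hIcard : ℓ ≤ I.card := by
      classical
      set T := D.image ω with hT
      have hTcard : T.card = k := by
        rw [hT, Finset.card_image_of_injOn hinj, hcard]
      have hsplit :
          (T.filter (fun h => h.isLeft)).card +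
            (T.filter (fun h => ¬ h.isLeft)).card = T.card :=
        Finset.card_filter_add_card_filter_not _
      have hB : (T.filter (fun h => ¬ h.isLeft)).card ≤ r := by
        have hsub : T.filter (fun h => ¬ h.isLeft) ⊆
            (Finset.univ : Finset (Fin r)).image Sum.inr := by
          intro h hh
          rcases Finset.mem_filter.mp hh with ⟨-, h2⟩
          rcases h with t | s
          · simp at h2
          · simp
        calc (T.filter (fun h => ¬ h.isLeft)).card
            ≤ ((Finset.univ : Finset (Fin r)).image Sum.inr).card :=
              Finset.card_le_card hsub
          _ ≤ (Finset.univ : Finset (Fin r)).card := Finset.card_image_le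
          _ = r := by simp
      have hA : T.filter (fun h => h.isLeft) = I.image Sum.inl := by
        ext h
        constructor
        · intro hh
          rcases Finset.mem_filter.mp hh with ⟨h1, h2⟩
          rcases h with t | s
          · refine Finset.mem_image.mpr ⟨t, ?_, rfl⟩
            rw [hmemI]
            rcases Finset.mem_image.mp h1 with ⟨i, hi, hωi⟩
            exact ⟨i, hi, hωi⟩
          · simp at h2
        · intro hh
          rcases Finset.mem_image.mp hh with ⟨t, ht, rfl⟩
          rcases (hmemI t).mp ht with ⟨i, hi, hωi⟩
          exact Finset.mem_filter.mpr ⟨Finset.mem_image.mpr ⟨i, hi, hωi⟩, rfl⟩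
      have hAI : (T.filter (fun h => h.isLeft)).card = I.card := by
        rw [hA, Finset.card_image_of_injective _ Sum.inl_injective]
      omega
    -- Step 2 : the union of the S t, t ∈ I, has at most q elements
    set C : Finset E := I.biUnion S with hC
    have hCq : C.card ≤ q := by
      classical
      set X : Finset (E ⊕ Fin d) :=
        C.map ⟨Sum.inl, Sum.inl_injective⟩ ∪ I.map ⟨Sum.inr, Sum.inr_injective⟩
        with hX
      have hXcard : X.card = C.card + I.card := by
        rw [hX, Finset.card_union_of_disjoint, Finset.card_map, Finset.card_map]
        simp [Finset.disjoint_left]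
      -- every allocated agent in X gets a starred house in I
      have hkey : ∀ i ∈ X ∩ D, ω i ∈ I.image Sum.inl := by
        intro i hi
        rcases Finset.mem_inter.mp hi with ⟨hiX, hiD⟩
        rcases Finset.mem_union.mp hiX with h1 | h1
        · rcases Finset.mem_map.mp h1 with ⟨e, he, rfl⟩
          -- e is covered by some allocated starred house
          rcases Finset.mem_biUnion.mp he with ⟨t, htI, het⟩
          rcases (hmemI t).mp htI with ⟨j, hjD, hωj⟩
          rcases hEF _ hiD with h | h
          · rcases h with ⟨t', het', hωi⟩
            refine Finset.mem_image.mpr ⟨t', ?_, hωi.symm⟩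
            rw [hmemI]
            exact ⟨Sum.inl e, hiD, hωi⟩
          · exact absurd (⟨t, het, hωj⟩ :
              ω j ∈ covPref d r S (Sum.inl e)) (h j hjD)
        · rcases Finset.mem_map.mp h1 with ⟨t, ht, rfl⟩
          rcases (hmemI t).mp ht with ⟨j, hjD, hωj⟩
          rcases hEF _ hiD with h | h
          · exact Finset.mem_image.mpr ⟨t, ht, (by exact h : ω (Sum.inr t) = Sum.inl t).symm⟩
          · exact absurd (by exact hωj : ω j ∈ covPref d r S (Sum.inr t)) (h j hjD)
      have hinter : (X ∩ D).card ≤ I.card := by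
        calc (X ∩ D).card ≤ (I.image Sum.inl).card :=
              Finset.card_le_card_of_injOn ω hkey
                (hinj.mono (by intro x hx; exact (Finset.mem_inter.mp hx).2))
          _ ≤ I.card := Finset.card_image_le
      have hsdiff : (X ∩ D).card + (X \ D).card = X.card :=
        Finset.card_inter_add_card_sdiff X D
      have hout : (X \ D).card ≤ q := by
        have hsub : X \ D ⊆ Dᶜ := by
          intro x hx
          rcases Finset.mem_sdiff.mp hx with ⟨-, h2⟩
          simpa using h2
        have := Finset.card_le_card hsub
        rw [Finset.card_compl, hcard] at this
        have hcardsum : Fintype.card (E ⊕ Fin d) = n + d := by simp [hn]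
        omega
      omega
    obtain ⟨I', hI'sub, hI'card⟩ := Finset.exists_subset_card_eq hIcard
    refine ⟨I', hI'card, le_trans (Finset.card_le_card ?_) hCq⟩
    exact Finset.biUnion_subset_biUnion_of_subset_left S hI'sub
  · rintro ⟨I, hIcard, hIq⟩
    classical
    obtain ⟨C', hsubC', -, hC'card⟩ :=
      Finset.exists_subsuperset_card_eq (I.biUnion S).subset_univ hIq (by simpa using hqE)
    -- dummy recipients
    set G : Finset (E ⊕ Fin d) :=
      C'ᶜ.map ⟨Sum.inl, Sum.inl_injective⟩ ∪ Iᶜ.map ⟨Sum.inr, Sum.inr_injective⟩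
      with hG
    have hGcard : G.card = r := by
      rw [hG, Finset.card_union_of_disjoint (by simp [Finset.disjoint_left]),
        Finset.card_map, Finset.card_map, Finset.card_compl, Finset.card_compl,
        hIcard]
      simp only [Fintype.card_fin, ← hn]
      omega
    have hGl : ∀ e : E, Sum.inl e ∈ G ↔ e ∉ C' := by intro e; simp [hG]
    have hGr' : ∀ t : Fin d, Sum.inr t ∈ G ↔ t ∉ I := by intro t; simp [hG]
    have hcardG : Fintype.card ↥G = r := by rw [Fintype.card_coe]; exact hGcard
    set σ : ↥G ≃ Fin r := Fintype.equivFinOfCardEq hcardG with hσ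
    have hd : 0 < d := lt_of_lt_of_le hℓ hℓd
    set ω : E ⊕ Fin d → Fin d ⊕ Fin r := fun i =>
      if h : i ∈ G then Sum.inr (σ ⟨i, h⟩)
      else Sum.elim (fun _ => Sum.inl ⟨0, hd⟩) (fun t => Sum.inl t) i with hω
    set D : Finset (E ⊕ Fin d) :=
      C'ᶜ.map ⟨Sum.inl, Sum.inl_injective⟩ ∪
        Finset.univ.map ⟨Sum.inr, Sum.inr_injective⟩ with hD
    -- structure of D outside G
    have hDnotG : ∀ i ∈ D, i ∉ G → ∃ t, t ∈ I ∧ i = Sum.inr t := by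
      intro i hiD hiG
      rcases i with e | t
      · exfalso
        apply hiG
        rw [hGl]
        rcases Finset.mem_union.mp hiD with h | h
        · rcases Finset.mem_map.mp h with ⟨e', he', he⟩
          simp only [Function.Embedding.coeFn_mk] at he
          cases he
          simpa using he'
        · rcases Finset.mem_map.mp h with ⟨t, -, ht⟩
          simp at ht
      · refine ⟨t, ?_, rfl⟩
        by_contra ht
        exact hiG ((hGr' t).mpr ht)
    have hωform : ∀ i ∈ D, (∃ s, ω i = Sum.inr s) ∨
        (∃ t, t ∈ I ∧ i = Sum.inr t ∧ ω i = Sum.inl t) := by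
      intro i hiD
      by_cases h : i ∈ G
      · exact Or.inl ⟨σ ⟨i, h⟩, by rw [hω]; simp [h]⟩
      · rcases hDnotG i hiD h with ⟨t, htI, rfl⟩
        exact Or.inr ⟨t, htI, rfl, by rw [hω]; simp [h]⟩
    refine ⟨D, ω, ?_, ?_, ?_⟩
    · rw [hD, Finset.card_union_of_disjoint (by simp [Finset.disjoint_left]),
        Finset.card_map, Finset.card_map, Finset.card_compl, Finset.card_univ,
        hC'card]
      simp [← hn, hk]
    · intro i hiD j hjD hij
      have hiD' : i ∈ D := Finset.mem_coe.mp hiD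
      have hjD' : j ∈ D := Finset.mem_coe.mp hjD
      by_cases hi : i ∈ G <;> by_cases hj : j ∈ G
      · rw [hω] at hij
        simp only [hi, hj, dif_pos] at hij
        have := σ.injective (Sum.inr_injective hij)
        exact congrArg Subtype.val this
      · exfalso
        rcases hDnotG j hjD' hj with ⟨t, -, rfl⟩
        rw [hω] at hij
        simp [hi, hj] at hij
      · exfalso
        rcases hDnotG i hiD' hi with ⟨t, -, rfl⟩
        rw [hω] at hij
        simp [hi, hj] at hij
      · rcases hDnotG i hiD' hi with ⟨t, -, rfl⟩
        rcases hDnotG j hjD' hj with ⟨t', -, rfl⟩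
        rw [hω] at hij
        simp only [hi, hj, dif_neg, not_false_iff, Sum.elim_inr] at hij
        cases Sum.inl_injective hij
        rfl
    · intro i hiD
      by_cases h : i ∈ G
      · right
        intro j hjD hcontra
        rcases i with e | t
        · -- a_e with e ∉ C' : no allocated house is a starred house in I
          have heC' : e ∉ C' := (hGl e).mp h
          rcases hcontra with ⟨t, het, hωj⟩
          rcases hωform j hjD with ⟨s, hs⟩ | ⟨t', ht'I, -, hωj'⟩
          · rw [hs] at hωj; simp at hωj
          · rw [hωj'] at hωj
            cases Sum.inl_injective hωj
            exact heC' (hsubC' (Finset.mem_biUnion.mpr ⟨t, ht'I, het⟩))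
        · have htI : t ∉ I := (hGr' t).mp h
          have hωj : ω j = Sum.inl t := hcontra
          rcases hωform j hjD with ⟨s, hs⟩ | ⟨t', ht'I, -, hωj'⟩
          · rw [hs] at hωj; simp at hωj
          · rw [hωj'] at hωj
            cases Sum.inl_injective hωj
            exact htI ht'I
      · left
        rcases hDnotG i hiD h with ⟨t, htI, rfl⟩
        show ω (Sum.inr t) ∈ {h | h = Sum.inl t}
        rw [hω]
        simp [h]
end

section
/- Consider the instance built from a Minimum Coverage input as follows: given a finite set E, subsets S_1, …, S_d ⊆ E, positive integers q ≤ |E| and ℓ ≤ d, set k = |E| − q + d and r = |E| − q + d − ℓ; the agents are { a_e : e ∈ E } ∪ { a*_t : t ∈ {1,…,d} }, the houses are { h*_t : t ∈ {1,…,d} } ∪ { h_s : s ∈ {1,…,r} }, with binary preferences A_{a_e} = { h*_t : e ∈ S_t } and A_{a*_t} = { h*_t }. If there exists a partial allocation with exactly k allocated agents in which every allocated agent is envy-free, then there exists such a partial allocation ω' additionally satisfying: for every t ∈ {1,…,d}, if house h*_t is allocated under ω', then ω'(a*_t) = h*_t. -/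
/-- In the instance built from a Minimum Coverage input (with `k = |E| − q + d` and
`r = |E| − q + d − ℓ`), if there is a partial allocation with exactly `k` allocated agents in
which every allocated agent is envy-free, then there is such a partial allocation which
additionally allocates each allocated house `h*_t` to the agent `a*_t`. -/
theorem stmt_11 {E : Type*} [Fintype E] [DecidableEq E]
    (d : ℕ) (S : Fin d → Finset E) (q ℓ : ℕ)
    (hq : 0 < q) (hℓ : 0 < ℓ) (hqE : q ≤ Fintype.card E) (hℓd : ℓ ≤ d)
    (hex : ∃ (D : Finset (E ⊕ Fin d))
        (ω : E ⊕ Fin d → Fin d ⊕ Fin (Fintype.card E - q + d - ℓ)),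
        D.card = Fintype.card E - q + d ∧ Set.InjOn ω ↑D ∧
        ∀ i ∈ D, (ω i ∈ covPref d (Fintype.card E - q + d - ℓ) S i ∨
          ∀ j ∈ D, ω j ∉ covPref d (Fintype.card E - q + d - ℓ) S i)) :
    ∃ (D' : Finset (E ⊕ Fin d))
        (ω' : E ⊕ Fin d → Fin d ⊕ Fin (Fintype.card E - q + d - ℓ)),
        D'.card = Fintype.card E - q + d ∧ Set.InjOn ω' ↑D' ∧
        (∀ i ∈ D', (ω' i ∈ covPref d (Fintype.card E - q + d - ℓ) S i ∨
          ∀ j ∈ D', ω' j ∉ covPref d (Fintype.card E - q + d - ℓ) S i)) ∧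
        (∀ t : Fin d, (∃ j ∈ D', ω' j = Sum.inl t) →
          (Sum.inr t ∈ D' ∧ ω' (Sum.inr t) = Sum.inl t)) := by
  classical
  obtain ⟨D, ω, hcard, hinj, hEF⟩ := hex
  -- Key: if a*_t is allocated and h*_t is allocated, then a*_t holds h*_t.
  have key : ∀ t : Fin d, Sum.inr t ∈ D → (∃ j ∈ D, ω j = Sum.inl t) →
      ω (Sum.inr t) = Sum.inl t := by
    rintro t ht ⟨j, hj, hjt⟩
    rcases hEF _ ht with h | h
    · simpa [covPref] using h
    · exact absurd (show ω j ∈ covPref d (Fintype.card E - q + d - ℓ) S (Sum.inr t) by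
        simp [covPref, hjt]) (h j hj)
  -- bad indices: h*_t allocated, a*_t unallocated
  let Bad : Finset (Fin d) :=
    Finset.univ.filter (fun t => (∃ j ∈ D, ω j = Sum.inl t) ∧ Sum.inr t ∉ D)
  have hBad : ∀ t, t ∈ Bad ↔ (∃ j ∈ D, ω j = Sum.inl t) ∧ Sum.inr t ∉ D := by
    intro t; simp [Bad]
  -- removed agents: holders of h*_t for t bad
  let R : (E ⊕ Fin d) → Prop := fun j => ∃ t ∈ Bad, ω j = Sum.inl t
  let D' : Finset (E ⊕ Fin d) := D.filter (fun j => ¬ R j) ∪ Bad.image Sum.inr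
  let ω' : E ⊕ Fin d → Fin d ⊕ Fin (Fintype.card E - q + d - ℓ) := fun i =>
    match i with
    | Sum.inl e => ω (Sum.inl e)
    | Sum.inr t => if (∃ j ∈ D, ω j = Sum.inl t) then Sum.inl t else ω (Sum.inr t)
  have hagree : ∀ j ∈ D, ω' j = ω j := by
    intro j hj
    match j with
    | Sum.inl e => rfl
    | Sum.inr t =>
      by_cases h : ∃ j ∈ D, ω j = Sum.inl t
      · simp only [ω', if_pos h]
        exact (key t hj h).symm
      · simp only [ω', if_neg h]
  have hmem : ∀ j, j ∈ D' ↔ (j ∈ D ∧ ¬ R j) ∨ ∃ t ∈ Bad, j = Sum.inr t := by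
    intro j
    simp only [D', Finset.mem_union, Finset.mem_filter, Finset.mem_image]
    constructor
    · rintro (⟨h1, h2⟩ | ⟨t, ht, rfl⟩)
      · exact Or.inl ⟨h1, h2⟩
      · exact Or.inr ⟨t, ht, rfl⟩
    · rintro (⟨h1, h2⟩ | ⟨t, ht, rfl⟩)
      · exact Or.inl ⟨h1, h2⟩
      · exact Or.inr ⟨t, ht, rfl⟩
  -- values of ω' on new elements
  have hnewval : ∀ t ∈ Bad, ω' (Sum.inr t) = Sum.inl t := by
    intro t ht
    have h := ((hBad t).1 ht).1
    simp only [ω', if_pos h]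
  -- choice of holder
  let g : Fin d → (E ⊕ Fin d) := fun t =>
    if h : ∃ j ∈ D, ω j = Sum.inl t then h.choose else Sum.inr t
  have hg : ∀ t ∈ Bad, g t ∈ D ∧ ω (g t) = Sum.inl t := by
    intro t ht
    have h := ((hBad t).1 ht).1
    simp only [g, dif_pos h]
    exact ⟨h.choose_spec.1, h.choose_spec.2⟩
  -- cardinality
  have himage : D.filter R = Bad.image g := by
    ext j
    simp only [Finset.mem_filter, Finset.mem_image]
    constructor
    · rintro ⟨hjD, t, ht, hjt⟩
      refine ⟨t, ht, ?_⟩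
      obtain ⟨hgD, hgt⟩ := hg t ht
      exact hinj hgD hjD (hgt.trans hjt.symm)
    · rintro ⟨t, ht, rfl⟩
      obtain ⟨hgD, hgt⟩ := hg t ht
      exact ⟨hgD, t, ht, hgt⟩
  have hgcard : (D.filter R).card = Bad.card := by
    rw [himage]
    apply Finset.card_image_of_injOn
    intro t ht s hs hts
    have h1 := (hg t ht).2
    have h2 := (hg s hs).2
    rw [hts, h2] at h1
    exact (Sum.inl.injEq _ _ ▸ h1).symm
  have hdisj : Disjoint (D.filter (fun j => ¬ R j)) (Bad.image Sum.inr) := by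
    rw [Finset.disjoint_right]
    rintro j hj
    obtain ⟨t, ht, rfl⟩ := Finset.mem_image.1 hj
    intro hmem'
    exact ((hBad t).1 ht).2 (Finset.mem_filter.1 hmem').1
  have hcard' : D'.card = D.card := by
    have h1 : D'.card = (D.filter (fun j => ¬ R j)).card
        + (Bad.image (Sum.inr : Fin d → E ⊕ Fin d)).card :=
      Finset.card_union_of_disjoint hdisj
    have h2 : (Bad.image (Sum.inr : Fin d → E ⊕ Fin d)).card = Bad.card :=
      Finset.card_image_of_injective _ Sum.inr_injective
    have h3 : (D.filter (fun j => ¬ R j)).card + (D.filter R).card = D.card := by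
      rw [add_comm]
      exact Finset.card_filter_add_card_filter_not _
    omega
  -- injectivity
  have hinj' : Set.InjOn ω' ↑D' := by
    intro a ha b hb hab
    rw [Finset.mem_coe, hmem] at ha hb
    rcases ha with ⟨haD, haR⟩ | ⟨t, ht, rfl⟩ <;>
      rcases hb with ⟨hbD, hbR⟩ | ⟨s, hs, rfl⟩
    · exact hinj haD hbD (by rwa [hagree a haD, hagree b hbD] at hab)
    · rw [hagree a haD, hnewval s hs] at hab
      exact absurd ⟨s, hs, hab⟩ haR
    · rw [hagree b hbD, hnewval t ht] at hab
      exact absurd ⟨t, ht, hab.symm⟩ hbR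
    · rw [hnewval t ht, hnewval s hs] at hab
      rw [Sum.inl.injEq] at hab
      rw [hab]
  -- envy-freeness
  have hEF' : ∀ i ∈ D', (ω' i ∈ covPref d (Fintype.card E - q + d - ℓ) S i ∨
      ∀ j ∈ D', ω' j ∉ covPref d (Fintype.card E - q + d - ℓ) S i) := by
    intro i hi
    rw [hmem] at hi
    rcases hi with ⟨hiD, hiR⟩ | ⟨t, ht, rfl⟩
    · rcases hEF i hiD with h | h
      · left; rwa [hagree i hiD]
      · right
        intro j hj
        rw [hmem] at hj
        rcases hj with ⟨hjD, _⟩ | ⟨s, hs, rfl⟩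
        · rw [hagree j hjD]; exact h j hjD
        · rw [hnewval s hs]
          obtain ⟨hgD, hgt⟩ := hg s hs
          rw [← hgt]
          exact h _ hgD
    · left
      rw [hnewval t ht]
      simp [covPref]
  refine ⟨D', ω', hcard'.trans hcard, hinj', hEF', ?_⟩
  rintro t ⟨j, hj, hjt⟩
  rw [hmem] at hj
  rcases hj with ⟨hjD, hjR⟩ | ⟨s, hs, rfl⟩
  · rw [hagree j hjD] at hjt
    have halloc : ∃ j ∈ D, ω j = Sum.inl t := ⟨j, hjD, hjt⟩
    have htnb : t ∉ Bad := fun ht => hjR ⟨t, ht, hjt⟩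
    have htD : Sum.inr t ∈ D := by
      by_contra h
      exact htnb ((hBad t).2 ⟨halloc, h⟩)
    have hωt := key t htD halloc
    have hnR : ¬ R (Sum.inr t) := by
      rintro ⟨t', ht', heq⟩
      rw [hωt, Sum.inl.injEq] at heq
      exact htnb (heq ▸ ht')
    refine ⟨(hmem _).2 (Or.inl ⟨htD, hnR⟩), ?_⟩
    simp only [ω', if_pos halloc]
  · have hv := hnewval s hs
    rw [hv, Sum.inl.injEq] at hjt
    subst hjt
    exact ⟨(hmem _).2 (Or.inr ⟨s, hs, rfl⟩), hv⟩
end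

section
/- Let H be a finite set partitioned as A ⊎ B with enumerations A = {a_1, …, a_p} and B = {b_1, …, b_r}. Consider the family L of p + r strict linear orders on H defined by: for each j ∈ {1,…,p}, the order a_j ≻ a_1 ≻ … ≻ a_{j−1} ≻ a_{j+1} ≻ … ≻ a_p ≻ b_1 ≻ … ≻ b_r; and for each j ∈ {1,…,r}, the order a_1 ≻ … ≻ a_p ≻ b_j ≻ b_1 ≻ … ≻ b_{j−1} ≻ b_{j+1} ≻ … ≻ b_r. Then for every W ⊆ H and every h ∈ W, there exists ≻ ∈ L with h ≻ w for all w ∈ W \ {h} if and only if h ∈ A or W ∩ A = ∅. (That is, an agent with binary preferences (A,B) is envy-free at house h among allocated houses W exactly when some list in L ranks h above all other houses of W.) -/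
/-- Ranking key of the `j`-th list of the first kind (`j ∈ Fin p`):
`a_j ≻ a_1 ≻ … ≻ a_{j−1} ≻ a_{j+1} ≻ … ≻ a_p ≻ b_1 ≻ … ≻ b_q`
(smaller key means more preferred; here `A = Fin p` are the `Sum.inl`s and `B = Fin q`
the `Sum.inr`s). -/
def keyA (p q : ℕ) (j : Fin p) : Fin p ⊕ Fin q → ℕ :=
  Sum.elim (fun i => if i = j then 0 else i.val + 1) (fun s => p + 2 + s.val)

/-- Ranking key of the `j`-th list of the second kind (`j ∈ Fin q`):
`a_1 ≻ … ≻ a_p ≻ b_j ≻ b_1 ≻ … ≻ b_{j−1} ≻ b_{j+1} ≻ … ≻ b_q`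
(smaller key means more preferred). -/
def keyB (p q : ℕ) (j : Fin q) : Fin p ⊕ Fin q → ℕ :=
  Sum.elim (fun i => i.val) (fun s => if s = j then p else p + 1 + s.val)

lemma keyInj_order {α : Type*} (f : α → ℕ) (hf : Function.Injective f) :
    IsStrictTotalOrder α (fun x y => f x < f y) := by
  exact { trichotomous := fun a b => by
            rcases lt_trichotomy (f a) (f b) with h | h | h
            exacts [fun h1 _ => absurd h h1, fun _ _ => hf h, fun _ h2 => absurd h h2],
          irrefl := fun a => lt_irrefl _,
          trans := fun a b c => Nat.lt_trans }

lemma keyA_inj (p q : ℕ) (j : Fin p) : Function.Injective (keyA p q j) := by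
  intro x y hxy
  rcases x with i | s <;> rcases y with i' | s' <;>
    simp only [keyA, Sum.elim_inl, Sum.elim_inr] at hxy
  · split_ifs at hxy with h1 h2 h2 <;>
      first
        | rw [h1, h2]
        | exact absurd hxy (by omega)
        | exact congrArg Sum.inl (Fin.ext (by omega))
  · exfalso; have := i.isLt; split_ifs at hxy <;> omega
  · exfalso; have := i'.isLt; split_ifs at hxy <;> omega
  · exact congrArg Sum.inr (Fin.ext (by omega))

lemma keyB_inj (p q : ℕ) (j : Fin q) : Function.Injective (keyB p q j) := by
  intro x y hxy
  rcases x with i | s <;> rcases y with i' | s' <;>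
    simp only [keyB, Sum.elim_inl, Sum.elim_inr] at hxy
  · exact congrArg Sum.inl (Fin.ext hxy)
  · exfalso; have := i.isLt; split_ifs at hxy <;> omega
  · exfalso; have := i'.isLt; split_ifs at hxy <;> omega
  · split_ifs at hxy with h1 h2 h2 <;>
      first
        | rw [h1, h2]
        | exact absurd hxy (by omega)
        | exact congrArg Sum.inr (Fin.ext (by omega))

/-- With `H = Fin p ⊕ Fin q` (houses in `A` are the left summands, houses in `B` the right
summands) and the family `L` of `p + q` strict linear orders given by the keys `keyA` and
`keyB`, for every `W ⊆ H` and `h ∈ W` there is an order in `L` ranking `h` above all other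
elements of `W` if and only if `h ∈ A` or `W ∩ A = ∅`. -/
theorem stmt_12 (p q : ℕ) (W : Set (Fin p ⊕ Fin q)) (h : Fin p ⊕ Fin q) (hW : h ∈ W) :
    (∃ r : StrictLinearOrder (Fin p ⊕ Fin q),
        ((∃ j : Fin p, r.1 = fun x y => keyA p q j x < keyA p q j y) ∨
         (∃ j : Fin q, r.1 = fun x y => keyB p q j x < keyB p q j y)) ∧
        ∀ w ∈ W, w ≠ h → r.1 h w) ↔
    ((∃ i : Fin p, h = Sum.inl i) ∨ ∀ w ∈ W, ∀ i : Fin p, w ≠ Sum.inl i) := by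
  constructor
  · rintro ⟨r, hr, htop⟩
    rcases h with i | s
    · exact Or.inl ⟨i, rfl⟩
    · refine Or.inr fun w hw i hwi => ?_
      subst hwi
      have hne : (Sum.inl i : Fin p ⊕ Fin q) ≠ Sum.inr s := by simp
      have hlt := htop _ hw hne
      rcases hr with ⟨j, hj⟩ | ⟨j, hj⟩ <;> rw [hj] at hlt <;>
        simp only [keyA, keyB, Sum.elim_inl, Sum.elim_inr] at hlt <;>
        have := i.isLt <;> split_ifs at hlt <;> omega
  · rintro (⟨i, rfl⟩ | hB)
    · refine ⟨⟨fun x y => keyA p q i x < keyA p q i y, keyInj_order _ (keyA_inj p q i)⟩,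
        Or.inl ⟨i, rfl⟩, fun w hw hwne => ?_⟩
      show keyA p q i (Sum.inl i) < keyA p q i w
      rcases w with i' | s' <;> simp only [keyA, Sum.elim_inl, Sum.elim_inr]
      · have hne : i' ≠ i := fun hh => hwne (by rw [hh])
        simp [hne]
      · simp
    · rcases h with i | s
      · exact absurd rfl (hB _ hW i)
      · refine ⟨⟨fun x y => keyB p q s x < keyB p q s y, keyInj_order _ (keyB_inj p q s)⟩,
          Or.inr ⟨s, rfl⟩, fun w hw hwne => ?_⟩
        show keyB p q s (Sum.inr s) < keyB p q s w
        rcases w with i' | s'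
        · exact absurd rfl (hB _ hw i')
        · have hne : s' ≠ s := fun hh => hwne (by rw [hh])
          simp only [keyB, Sum.elim_inr, if_neg hne, if_pos trivial]
          omega
end

section
/- Let N be a finite set of agents, each with a total preorder ≿_i on a finite set H, and let A be an N×N binary matrix with A_{ii} = 1 for all i. Say an injective allocation ω : N → H satisfies A if for all agents i, j: ω(i) ≿_i ω(j), and moreover ω(i) ≻_i ω(j) strictly whenever A_{ij} = 0. Let H' ⊆ H and suppose every allocation satisfying A has image contained in H'. Define the bipartite graph G on parts N and H' with an edge between agent i and house h exactly when h is a ≿_i-maximum of H' and there is no agent j ≠ i with A_{j,i} = 0 for which h is a ≿_j-maximum of H'. Suppose Z ⊆ N satisfies |Z| > |N_G(Z)| (where N_G(Z) is the set of houses adjacent in G to some agent of Z) and Z is inclusion-minimal with this property. Let P(Z) = { h ∈ H' : h is a ≿_i-maximum of H' for some i ∈ Z }. Then every allocation satisfying A has image contained in H' \ P(Z). -/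
/-- An injective allocation `ω` satisfies the envy-matrix `A` (with respect to weak preferences
`R i`) if `ω i ≿_i ω j` for all agents `i, j`, and moreover `ω i ≻_i ω j` strictly whenever
`A i j = false`. -/
def SatisfiesEnvyMatrix {N H : Type*} (R : N → H → H → Prop) (A : N → N → Bool)
    (ω : N → H) : Prop :=
  Function.Injective ω ∧
  (∀ i j : N, R i (ω i) (ω j)) ∧
  (∀ i j : N, A i j = false → R i (ω i) (ω j) ∧ ¬ R i (ω j) (ω i))

/-- `h` is a `≿_i`-maximum of `H'`. -/
def isTopChoice {N H : Type*} (R : N → H → H → Prop) (H' : Set H) (i : N) (h : H) : Prop :=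
  h ∈ H' ∧ ∀ h' ∈ H', R i h h'

/-- The edge relation of the bipartite graph `G` on parts `N` and `H'`: agent `i` is joined to
house `h` iff `h` is a `≿_i`-maximum of `H'` and there is no agent `j ≠ i` with `A j i = 0`
for which `h` is a `≿_j`-maximum of `H'`. -/
def EMedge {N H : Type*} (R : N → H → H → Prop) (A : N → N → Bool) (H' : Set H)
    (i : N) (h : H) : Prop :=
  isTopChoice R H' i h ∧ ¬ ∃ j : N, j ≠ i ∧ A j i = false ∧ isTopChoice R H' j h

/-- Key lemma for the AllocSatisfyingEnvyMatrix algorithm: suppose every allocation satisfying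
the envy-matrix `A` has image contained in `H'`, and `Z` is an inclusion-minimal Hall violator
of the bipartite graph `G` (i.e. `|Z| > |N_G(Z)|` and no proper subset has this property).
Then every allocation satisfying `A` has image contained in `H' \ P(Z)`, where `P(Z)` is the
set of houses of `H'` that are a `≿_i`-maximum of `H'` for some `i ∈ Z`. -/
theorem stmt_14 {N H : Type*} [Fintype N] [Fintype H]
    (R : N → H → H → Prop) (hR : ∀ i, IsTotalPreorderRel (R i))
    (A : N → N → Bool) (hdiag : ∀ i, A i i = true)
    (H' : Set H)
    (hH' : ∀ ω : N → H, SatisfiesEnvyMatrix R A ω → ∀ i, ω i ∈ H')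
    (Z : Set N)
    (hZ : ({h : H | ∃ i ∈ Z, EMedge R A H' i h} : Set H).ncard < Z.ncard)
    (hmin : ∀ Z' : Set N, Z' ⊂ Z →
        ¬ (({h : H | ∃ i ∈ Z', EMedge R A H' i h} : Set H).ncard < Z'.ncard))
    (ω : N → H) (hω : SatisfiesEnvyMatrix R A ω) :
    ∀ i : N, ω i ∈ H' \ {h ∈ H' | ∃ j ∈ Z, isTopChoice R H' j h} := by
  intro i
  have hmemH' : ∀ k, ω k ∈ H' := hH' ω hω
  refine ⟨hmemH' i, ?_⟩
  rintro ⟨-, j, hjZ, htop⟩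
  obtain ⟨hinj, hpref, hstrict⟩ := hω
  obtain ⟨_, htrans, _⟩ := hR j
  -- the set of agents of Z whose own house is a top choice of H'
  set Z₀ : Set N := {k ∈ Z | isTopChoice R H' k (ω k)} with hZ₀def
  have hZ₀sub : Z₀ ⊆ Z := fun k hk => hk.1
  have hj0 : j ∈ Z₀ := by
    refine ⟨hjZ, hmemH' j, fun h' hh' => ?_⟩
    exact htrans (hpref j i) (htop.2 h' hh')
  -- each agent of Z₀ is joined in G to its own house
  have hedge : ∀ k ∈ Z₀, EMedge R A H' k (ω k) := by
    rintro k ⟨hkZ, hktop⟩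
    refine ⟨hktop, ?_⟩
    rintro ⟨m, hmk, hAm, hmtop⟩
    exact (hstrict m k hAm).2 (hmtop.2 (ω m) (hmemH' m))
  -- hence ω '' Z₀ ⊆ N_G(Z)
  have himg : ω '' Z₀ ⊆ {h : H | ∃ i ∈ Z, EMedge R A H' i h} := by
    rintro _ ⟨k, hk, rfl⟩
    exact ⟨k, hZ₀sub hk, hedge k hk⟩
  -- N_G(Z \ Z₀) is disjoint from ω '' Z₀
  have hdisj : Disjoint ({h : H | ∃ i ∈ Z \ Z₀, EMedge R A H' i h} : Set H) (ω '' Z₀) := by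
    rw [Set.disjoint_left]
    rintro _ ⟨k', ⟨hk'Z, hk'notZ₀⟩, hek'⟩ ⟨k, hk, rfl⟩
    obtain ⟨_, htrans', _⟩ := hR k'
    exact hk'notZ₀ ⟨hk'Z, hmemH' k', fun h' hh' =>
      htrans' (hpref k' k) (hek'.1.2 h' hh')⟩
  have hsub : ({h : H | ∃ i ∈ Z \ Z₀, EMedge R A H' i h} : Set H) ∪ ω '' Z₀ ⊆
      {h : H | ∃ i ∈ Z, EMedge R A H' i h} := by
    rintro h (⟨k, hk, he⟩ | hh)
    · exact ⟨k, hk.1, he⟩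
    · exact himg hh
  have hcard1 : ({h : H | ∃ i ∈ Z \ Z₀, EMedge R A H' i h} : Set H).ncard + Z₀.ncard ≤
      ({h : H | ∃ i ∈ Z, EMedge R A H' i h} : Set H).ncard := by
    have := Set.ncard_le_ncard hsub (Set.toFinite _)
    rwa [Set.ncard_union_eq hdisj (Set.toFinite _) (Set.toFinite _),
      Set.ncard_image_of_injective _ hinj] at this
  have hcard2 : (Z \ Z₀).ncard + Z₀.ncard = Z.ncard :=
    Set.ncard_diff_add_ncard_of_subset hZ₀sub (Set.toFinite _)
  have hlt : ({h : H | ∃ i ∈ Z \ Z₀, EMedge R A H' i h} : Set H).ncard < (Z \ Z₀).ncard := by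
    omega
  exact hmin (Z \ Z₀) ⟨Set.diff_subset, fun hsub' => (hsub' hjZ).2 hj0⟩ hlt
end

section
/- Let G be a simple graph with vertex set {v_1, …, v_m} and let k ≤ m. Call a complete asymmetric relation R on {h_1, …, h_m} (for all distinct p, q exactly one of h_p R h_q and h_q R h_p holds) a realizable preference if h_i R h_j whenever i < j and v_i v_j is an edge of G. Then the following are equivalent: (a) there exist an injective map ω : {1,…,k} → {h_1,…,h_m} and realizable preferences R_1, …, R_k such that ω(a) R_a ω(b) for all a ∈ {1,…,k} and all b ≠ a; (b) G has an independent set of size k. (This is the correctness of the reduction from Independent Set to ExistsPossiblyEF under the pairwise probability model, where for each agent independently h_i is preferred to h_j with probability 1 if i < j and v_i v_j ∈ E(G), and with probability 1/2 otherwise, so that a realizable preference is precisely a realization of positive probability.) -/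
/-- A realizable preference (a realization of positive probability in the pairwise probability
model built from the graph `G`): a complete asymmetric relation `R` on the houses
`h_1, …, h_m` (for all distinct `p, q`, exactly one of `R p q` and `R q p` holds) such that
`h_i R h_j` whenever `i < j` and `v_i v_j` is an edge of `G`. -/
def RealizablePref {m : ℕ} (G : SimpleGraph (Fin m)) (R : Fin m → Fin m → Prop) : Prop :=
  (∀ p q : Fin m, p ≠ q → (R p q ↔ ¬ R q p)) ∧
  (∀ i j : Fin m, i < j → G.Adj i j → R i j)

/-- Correctness of the reduction from Independent Set to ExistsPossiblyEF under the pairwise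
probability model: there exist an injective allocation `ω` of houses to the `k` agents and
realizable preferences `R a` for each agent `a` under which every agent's own house beats
every other allocated house, if and only if `G` has an independent set of size `k`. -/
theorem stmt_15 (m k : ℕ) (hk : k ≤ m) (G : SimpleGraph (Fin m)) :
    (∃ ω : Fin k → Fin m, Function.Injective ω ∧
        ∃ R : Fin k → (Fin m → Fin m → Prop),
          (∀ a, RealizablePref G (R a)) ∧
          (∀ a b : Fin k, b ≠ a → R a (ω a) (ω b))) ↔
    (∃ s : Finset (Fin m), s.card = k ∧ ∀ v ∈ s, ∀ w ∈ s, ¬ G.Adj v w) := by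
  constructor
  · rintro ⟨ω, hω, R, hreal, hef⟩
    refine ⟨Finset.image ω Finset.univ, ?_, ?_⟩
    · rw [Finset.card_image_of_injective _ hω, Finset.card_univ, Fintype.card_fin]
    · intro v hv w hw hadj
      simp only [Finset.mem_image, Finset.mem_univ, true_and] at hv hw
      obtain ⟨a, rfl⟩ := hv
      obtain ⟨b, rfl⟩ := hw
      have hne : ω a ≠ ω b := hadj.ne
      have hab : a ≠ b := fun h => hne (by rw [h])
      rcases lt_or_gt_of_ne hne with h | h
      · have h1 : R b (ω a) (ω b) := (hreal b).2 _ _ h hadj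
        have h2 : R b (ω b) (ω a) := hef b a hab
        exact (((hreal b).1 _ _ hne).mp h1) h2
      · have h1 : R a (ω b) (ω a) := (hreal a).2 _ _ h hadj.symm
        have h2 : R a (ω a) (ω b) := hef a b hab.symm
        exact (((hreal a).1 _ _ hne.symm).mp h1) h2
  · rintro ⟨s, hcard, hind⟩
    classical
    set e := s.orderIsoOfFin hcard with he
    refine ⟨fun a => (e a : Fin m), fun a b hab => e.injective (Subtype.ext hab), ?_⟩
    have hmem : ∀ a : Fin k, ((e a : Fin m)) ∈ s := fun a => (e a).2
    refine ⟨fun a p q => if p ∈ s ∧ q ∈ s then (p = (e a : Fin m) ∨ (q ≠ (e a : Fin m) ∧ p < q))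
        else p < q, ?_, ?_⟩
    · intro a
      constructor
      · intro p q hpq
        have t1 : ¬ (p < q ∧ q < p) := fun ⟨h1, h2⟩ => absurd (h1.trans h2) (lt_irrefl _)
        have t2 : p < q ∨ q < p := hpq.lt_or_gt
        have t3 : ¬ (p = (e a : Fin m) ∧ q = (e a : Fin m)) :=
          fun ⟨h1, h2⟩ => hpq (h1.trans h2.symm)
        by_cases h : p ∈ s ∧ q ∈ s
        · have h' : q ∈ s ∧ p ∈ s := ⟨h.2, h.1⟩
          beta_reduce; rw [if_pos h, if_pos h']
          tauto
        · have h' : ¬ (q ∈ s ∧ p ∈ s) := fun hc => h ⟨hc.2, hc.1⟩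
          beta_reduce; rw [if_neg h, if_neg h']
          tauto
      · intro i j hij hadj
        have h : ¬ (i ∈ s ∧ j ∈ s) := fun ⟨hi, hj⟩ => hind i hi j hj hadj
        simp only [if_neg h]
        exact hij
    · intro a b hba
      have h : ((e a : Fin m)) ∈ s ∧ ((e b : Fin m)) ∈ s := ⟨hmem a, hmem b⟩
      beta_reduce; rw [if_pos h]
      exact Or.inl rfl
end
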